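/- arXiv:1611.07306 — 2 statements merged into one kernel-verified Lean document; each statement's English description precedes it below -/
import Mathlib

section
/- Let K be a field and I an ideal of P = K[x₁,…,xₙ]. The set of leading-term ideals { LT_σ(I) : σ a monomial order on P } is finite. -/
open MvPolynomial

/-- A monomial order on the exponent vectors `ν →₀ ℕ`: a linear order compatible with
addition and having `0` as least element. -/
structure MonomialOrd (ν : Type) where
  le : (ν →₀ ℕ) → (ν →₀ ℕ) → Prop
  le_refl : ∀ a, le a a
  le_trans : ∀ a b c, le a b → le b c → le a c
  le_antisymm : ∀ a b, le a b → le b a → a = b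
  le_total : ∀ a b, le a b ∨ le b a
  add_le_add : ∀ a b c, le a b → le (a + c) (b + c)
  zero_le : ∀ a, le 0 a

/-- `a` is the σ-largest exponent vector in the support of `f`
(so `X^a` is the σ-leading monomial of `f`). -/
def IsLeadingExp {K : Type} [Field K] {ν : Type} (σ : MonomialOrd ν)
    (f : MvPolynomial ν K) (a : ν →₀ ℕ) : Prop :=
  a ∈ f.support ∧ ∀ b ∈ f.support, σ.le b a

/-- The leading-term ideal `LT_σ(I)`: the ideal generated by the σ-leading monomials of the
nonzero elements of `I`. -/
noncomputable def ltIdeal {K : Type} [Field K] {ν : Type} (σ : MonomialOrd ν)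
    (I : Ideal (MvPolynomial ν K)) : Ideal (MvPolynomial ν K) :=
  Ideal.span { m | ∃ f ∈ I, ∃ a, IsLeadingExp σ f a ∧ m = monomial a (1 : K) }

/-- `G` is a σ-Gröbner basis of `I`: a finite subset of `I` whose σ-leading monomials
generate `LT_σ(I)`. -/
def IsGroebnerBasis {K : Type} [Field K] {ν : Type} (σ : MonomialOrd ν)
    (I : Ideal (MvPolynomial ν K)) (G : Finset (MvPolynomial ν K)) : Prop :=
  ↑G ⊆ (I : Set (MvPolynomial ν K)) ∧
    Ideal.span { m | ∃ g ∈ G, ∃ a, IsLeadingExp σ g a ∧ m = monomial a (1 : K) } = ltIdeal σ I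


section Aux

variable {K : Type} [Field K] {n : ℕ}

/-- Pointwise (divisibility) order implies the monomial order. -/
private lemma mord_le_of_le (σ : MonomialOrd (Fin n)) {a b : Fin n →₀ ℕ} (h : a ≤ b) :
    σ.le a b := by
  obtain ⟨c, rfl⟩ := le_iff_exists_add.mp h
  have := σ.add_le_add 0 c a (σ.zero_le c)
  rw [zero_add] at this
  rwa [add_comm]

/-- Well-foundedness of the strict monomial order, via Dickson's lemma. -/
private lemma mord_wf (σ : MonomialOrd (Fin n)) :
    WellFounded (fun a b : Fin n →₀ ℕ => σ.le a b ∧ a ≠ b) := by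
  letI : IsIrrefl (Fin n →₀ ℕ) (fun a b => σ.le a b ∧ a ≠ b) := ⟨fun a h => h.2 rfl⟩
  letI : IsTrans (Fin n →₀ ℕ) (fun a b => σ.le a b ∧ a ≠ b) :=
    ⟨fun a b c hab hbc => ⟨σ.le_trans _ _ _ hab.1 hbc.1,
      fun h => hbc.2 (σ.le_antisymm _ _ hbc.1 (h ▸ hab.1))⟩⟩
  letI : IsStrictOrder (Fin n →₀ ℕ) (fun a b => σ.le a b ∧ a ≠ b) := {}
  rw [RelEmbedding.wellFounded_iff_isEmpty]
  constructor
  intro g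
  obtain ⟨i, j, hij, hle⟩ := Set.isPWO_of_wellQuasiOrderedLE (Set.univ : Set (Fin n →₀ ℕ))
    (fun k => ⟨g k, Set.mem_univ _⟩)
  have h1 : σ.le (g j) (g i) ∧ (g j : Fin n →₀ ℕ) ≠ g i := g.map_rel_iff.mpr hij
  exact h1.2 (σ.le_antisymm _ _ h1.1 (mord_le_of_le σ hle))

/-- Any nonempty finset of exponent vectors has a σ-maximum. -/
private lemma mord_exists_max (σ : MonomialOrd (Fin n)) (s : Finset (Fin n →₀ ℕ))
    (hs : s.Nonempty) : ∃ a ∈ s, ∀ b ∈ s, σ.le b a := by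
  classical
  induction s using Finset.induction_on with
  | empty => exact absurd hs (by simp)
  | @insert a s ha ih =>
    rcases s.eq_empty_or_nonempty with rfl | hs'
    · refine ⟨a, Finset.mem_insert_self _ _, fun b hb => ?_⟩
      rcases Finset.mem_insert.mp hb with rfl | hb
      · exact σ.le_refl _
      · exact absurd hb (Finset.notMem_empty _)
    · obtain ⟨c, hc, hcm⟩ := ih hs'
      rcases σ.le_total a c with h | h
      · refine ⟨c, Finset.mem_insert_of_mem hc, fun b hb => ?_⟩
        rcases Finset.mem_insert.mp hb with rfl | hb
        · exact h
        · exact hcm b hb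
      · refine ⟨a, Finset.mem_insert_self _ _, fun b hb => ?_⟩
        rcases Finset.mem_insert.mp hb with rfl | hb
        · exact σ.le_refl _
        · exact σ.le_trans _ _ _ (hcm b hb) h

private lemma exists_leadingExp (σ : MonomialOrd (Fin n)) {f : MvPolynomial (Fin n) K}
    (hf : f ≠ 0) : ∃ a, IsLeadingExp σ f a := by
  obtain ⟨a, ha, hm⟩ := mord_exists_max σ f.support
    (Finset.nonempty_iff_ne_empty.mpr (fun h => hf (MvPolynomial.support_eq_empty.mp h)))
  exact ⟨a, ha, hm⟩

/-- The key reduction lemma: if `I` contains an element whose σ-leading monomial is not in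
the monomial ideal `J` (whose monomials are all divisible by leading monomials of elements
of `I`), then `I` contains a nonzero element none of whose monomials lie in `J`. -/
private lemma reduce (σ : MonomialOrd (Fin n)) (I J : Ideal (MvPolynomial (Fin n) K))
    (hJ : ∀ b : Fin n →₀ ℕ, monomial b (1 : K) ∈ J →
      ∃ m, (∃ g ∈ I, IsLeadingExp σ g m) ∧ m ≤ b) :
    ∀ bnd : Fin n →₀ ℕ, ∀ f ∈ I, ∀ a, IsLeadingExp σ f a → monomial a (1 : K) ∉ J →
      (∀ c ∈ f.support, monomial c (1 : K) ∈ J → σ.le c bnd) →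
      ∃ f' ∈ I, f' ≠ 0 ∧ ∀ c ∈ f'.support, monomial c (1 : K) ∉ J := by
  intro bnd
  refine (mord_wf σ).induction
    (C := fun bnd => ∀ f ∈ I, ∀ a, IsLeadingExp σ f a → monomial a (1 : K) ∉ J →
      (∀ c ∈ f.support, monomial c (1 : K) ∈ J → σ.le c bnd) →
      ∃ f' ∈ I, f' ≠ 0 ∧ ∀ c ∈ f'.support, monomial c (1 : K) ∉ J) bnd ?_
  clear bnd
  intro b IH f hf a ha haJ hbound
  classical
  by_cases hbad : ∃ c ∈ f.support, monomial c (1 : K) ∈ J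
  swap
  · push_neg at hbad
    refine ⟨f, hf, fun h => ?_, hbad⟩
    rw [h] at ha
    simp [IsLeadingExp] at ha
  obtain ⟨b0, hb0, hb0max⟩ := mord_exists_max σ
    (f.support.filter (fun c => monomial c (1 : K) ∈ J))
    (by obtain ⟨c, hc1, hc2⟩ := hbad; exact ⟨c, Finset.mem_filter.mpr ⟨hc1, hc2⟩⟩)
  have hb0s : b0 ∈ f.support := (Finset.mem_filter.mp hb0).1
  have hb0J : monomial b0 (1 : K) ∈ J := (Finset.mem_filter.mp hb0).2
  obtain ⟨m, ⟨g, hgI, hgm⟩, hmle⟩ := hJ b0 hb0J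
  set u := b0 - m with hu
  have huadd : u + m = b0 := tsub_add_cancel_of_le hmle
  have hgm0 : g.coeff m ≠ 0 := MvPolynomial.mem_support_iff.mp hgm.1
  set d := f.coeff b0 / g.coeff m with hd
  set q := monomial u d * g with hqdef
  -- every exponent in q is σ-below b0
  have hq : ∀ x ∈ q.support, σ.le x b0 := by
    intro x hx
    rw [MvPolynomial.mem_support_iff, hqdef, MvPolynomial.coeff_monomial_mul'] at hx
    by_cases hux : u ≤ x
    · rw [if_pos hux] at hx
      have hxg : (x - u) ∈ g.support := by
        rw [MvPolynomial.mem_support_iff]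
        intro h0
        rw [h0, mul_zero] at hx
        exact hx rfl
      have := σ.add_le_add (x - u) m u (hgm.2 _ hxg)
      rwa [tsub_add_cancel_of_le hux, add_comm m u, huadd] at this
    · rw [if_neg hux] at hx
      exact absurd rfl hx
  have hqb0 : q.coeff b0 = f.coeff b0 := by
    have h1 : q.coeff (u + m) = d * g.coeff m := by
      rw [hqdef]; exact MvPolynomial.coeff_monomial_mul m u d g
    rw [huadd] at h1
    rw [h1, hd, div_mul_cancel₀ _ hgm0]
  set f' := f - q with hf'def
  have hf'I : f' ∈ I := I.sub_mem hf (I.mul_mem_left _ hgI)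
  have hsupp : ∀ x ∈ f'.support, x ∈ f.support ∨ x ∈ q.support := by
    intro x hx
    rw [MvPolynomial.mem_support_iff, hf'def, MvPolynomial.coeff_sub] at hx
    by_contra h
    push_neg at h
    rw [MvPolynomial.notMem_support_iff.mp h.1, MvPolynomial.notMem_support_iff.mp h.2,
      sub_zero] at hx
    exact hx rfl
  have hb0f' : f'.coeff b0 = 0 := by
    rw [hf'def, MvPolynomial.coeff_sub, hqb0, sub_self]
  have haq : a ∉ q.support := by
    intro h
    have h1 : σ.le a b0 := hq a h
    have h2 : σ.le b0 a := ha.2 b0 hb0s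
    have : a = b0 := σ.le_antisymm _ _ h1 h2
    rw [this] at haJ
    exact haJ hb0J
  have hab0 : a ≠ b0 := by
    intro h
    rw [h] at haJ
    exact haJ hb0J
  have ha' : IsLeadingExp σ f' a := by
    constructor
    · rw [MvPolynomial.mem_support_iff, hf'def, MvPolynomial.coeff_sub,
        MvPolynomial.notMem_support_iff.mp haq, sub_zero]
      exact MvPolynomial.mem_support_iff.mp ha.1
    · intro x hx
      rcases hsupp x hx with h | h
      · exact ha.2 x h
      · exact σ.le_trans _ _ _ (hq x h) (ha.2 b0 hb0s)
  have hnewbound : ∀ c ∈ f'.support, monomial c (1 : K) ∈ J → σ.le c b0 ∧ c ≠ b0 := by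
    intro c hc hcJ
    have hcne : c ≠ b0 := by
      intro h
      rw [h, MvPolynomial.mem_support_iff] at hc
      exact hc hb0f'
    refine ⟨?_, hcne⟩
    rcases hsupp c hc with h | h
    · exact hb0max c (Finset.mem_filter.mpr ⟨h, hcJ⟩)
    · exact hq c h
  by_cases hbad' : ∃ c ∈ f'.support, monomial c (1 : K) ∈ J
  · obtain ⟨b1, hb1, hb1max⟩ := mord_exists_max σ
      (f'.support.filter (fun c => monomial c (1 : K) ∈ J))
      (by obtain ⟨c, hc1, hc2⟩ := hbad'; exact ⟨c, Finset.mem_filter.mpr ⟨hc1, hc2⟩⟩)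
    have hb1s : b1 ∈ f'.support := (Finset.mem_filter.mp hb1).1
    have hb1J : monomial b1 (1 : K) ∈ J := (Finset.mem_filter.mp hb1).2
    have hb1b0 := hnewbound b1 hb1s hb1J
    have hb0b : σ.le b0 b := hbound b0 hb0s hb0J
    have hb1lt : σ.le b1 b ∧ b1 ≠ b := by
      refine ⟨σ.le_trans _ _ _ hb1b0.1 hb0b, fun h => ?_⟩
      subst h
      exact hb1b0.2 (σ.le_antisymm _ _ hb1b0.1 hb0b)
    refine IH b1 hb1lt f' hf'I a ha' haJ ?_
    intro c hc hcJ
    exact hb1max c (Finset.mem_filter.mpr ⟨hc, hcJ⟩)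
  · push_neg at hbad'
    refine ⟨f', hf'I, fun h => ?_, hbad'⟩
    rw [h] at ha'
    simp [IsLeadingExp] at ha'

end Aux

/-- the set of leading-term ideals of a fixed ideal `I`, as the monomial
order varies, is finite. -/
theorem finite_leading_term_ideals {K : Type} [Field K] {n : ℕ}
    (I : Ideal (MvPolynomial (Fin n) K)) :
    Set.Finite { J : Ideal (MvPolynomial (Fin n) K) |
      ∃ σ : MonomialOrd (Fin n), J = ltIdeal σ I } := by
  classical
  by_contra hinf
  replace hinf : Set.Infinite { J : Ideal (MvPolynomial (Fin n) K) |
      ∃ σ : MonomialOrd (Fin n), J = ltIdeal σ I } := hinf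
  set P := MvPolynomial (Fin n) K with hP
  let S : Set (Ideal P) := { J | ∃ (M : Set (Fin n →₀ ℕ)) (T : Set (MonomialOrd (Fin n))),
      J = Ideal.span ((fun a => monomial a (1 : K)) '' M) ∧
      Set.Infinite { J' : Ideal P | ∃ σ ∈ T, J' = ltIdeal σ I } ∧
      ∀ σ ∈ T, ∀ m ∈ M, ∃ g ∈ I, IsLeadingExp σ g m }
  have hS0 : Ideal.span ((fun a => monomial a (1 : K)) '' (∅ : Set (Fin n →₀ ℕ))) ∈ S := by
    refine ⟨∅, Set.univ, rfl, ?_, fun σ _ m hm => absurd hm (Set.notMem_empty m)⟩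
    convert hinf using 2
    ext J
    simp
  obtain ⟨J, hJS, hmax⟩ := (isNoetherian_iff.mp (inferInstance : IsNoetherianRing P)).has_min
    S ⟨_, hS0⟩
  obtain ⟨M, T, hJdef, hTinf, hMlead⟩ := hJS
  set T' : Set (MonomialOrd (Fin n)) := {σ ∈ T | ltIdeal σ I ≠ J} with hT'
  have hT'inf : Set.Infinite { J' : Ideal P | ∃ σ ∈ T', J' = ltIdeal σ I } := by
    refine (hTinf.diff (Set.finite_singleton J)).mono ?_
    rintro x ⟨⟨σ, hσT, rfl⟩, hxJ⟩
    exact ⟨σ, ⟨hσT, by simpa using hxJ⟩, rfl⟩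
  obtain ⟨x0, σ0, hσ0, _⟩ := hT'inf.nonempty
  have hJsub : J ≤ ltIdeal σ0 I := by
    rw [hJdef, Ideal.span_le]
    rintro _ ⟨m, hm, rfl⟩
    obtain ⟨g, hgI, hglead⟩ := hMlead σ0 hσ0.1 m hm
    exact Ideal.subset_span ⟨g, hgI, m, hglead, rfl⟩
  have hstep : ∃ f ∈ I, ∃ a, IsLeadingExp σ0 f a ∧ monomial a (1 : K) ∉ J := by
    by_contra h
    push_neg at h
    refine hσ0.2 (le_antisymm ?_ hJsub)
    rw [ltIdeal, Ideal.span_le]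
    rintro _ ⟨f, hfI, a, hla, rfl⟩
    exact h f hfI a hla
  obtain ⟨f0, hf0I, a0, ha0, ha0J⟩ := hstep
  have hJdiv : ∀ b : Fin n →₀ ℕ, monomial b (1 : K) ∈ J →
      ∃ m, (∃ g ∈ I, IsLeadingExp σ0 g m) ∧ m ≤ b := by
    intro b hb
    rw [hJdef, mem_ideal_span_monomial_image] at hb
    obtain ⟨m, hmM, hmle⟩ := hb b (by simp [support_monomial])
    exact ⟨m, hMlead σ0 hσ0.1 m hmM, hmle⟩
  obtain ⟨bnd, hbnd, hbndmax⟩ := mord_exists_max σ0 f0.support ⟨a0, ha0.1⟩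
  obtain ⟨f, hfI, hfne, hfclean⟩ := reduce σ0 I J hJdiv bnd f0 hf0I a0 ha0 ha0J
    (fun c hc _ => hbndmax c hc)
  have hpig : ∃ a ∈ f.support, Set.Infinite { J' : Ideal P |
      ∃ σ, (σ ∈ T' ∧ IsLeadingExp σ f a) ∧ J' = ltIdeal σ I } := by
    by_contra h
    push_neg at h
    have hsub : { J' : Ideal P | ∃ σ ∈ T', J' = ltIdeal σ I } ⊆
        ⋃ a ∈ f.support, { J' : Ideal P |
          ∃ σ, (σ ∈ T' ∧ IsLeadingExp σ f a) ∧ J' = ltIdeal σ I } := by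
      rintro x ⟨σ, hσ, rfl⟩
      obtain ⟨a, ha⟩ := exists_leadingExp σ hfne
      exact Set.mem_biUnion ha.1 ⟨σ, ⟨hσ, ha⟩, rfl⟩
    refine hT'inf ?_
    refine Set.Finite.subset (Set.Finite.biUnion f.support.finite_toSet
      (fun a ha => h a ha)) hsub
  obtain ⟨a1, ha1s, ha1inf⟩ := hpig
  have hJ'S : Ideal.span ((fun a => monomial a (1 : K)) '' (insert a1 M)) ∈ S := by
    refine ⟨insert a1 M, {σ ∈ T' | IsLeadingExp σ f a1}, rfl, ?_, ?_⟩
    · exact ha1inf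
    · intro σ hσ m hm
      rcases Set.mem_insert_iff.mp hm with rfl | hm
      · exact ⟨f, hfI, hσ.2⟩
      · exact hMlead σ hσ.1.1 m hm
  have hlt : J < Ideal.span ((fun a => monomial a (1 : K)) '' (insert a1 M)) := by
    have hle : J ≤ Ideal.span ((fun a => monomial a (1 : K)) '' (insert a1 M)) := by
      rw [hJdef]
      exact Ideal.span_mono (Set.image_mono (Set.subset_insert _ _))
    refine lt_of_le_of_ne hle (fun hEq => ?_)
    have hmem : monomial a1 (1 : K) ∈
        Ideal.span ((fun a => monomial a (1 : K)) '' (insert a1 M)) :=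
      Ideal.subset_span ⟨a1, Set.mem_insert _ _, rfl⟩
    rw [← hEq] at hmem
    exact hfclean a1 ha1s hmem
  exact hmax _ hJ'S hlt
end

section
/- (Genericity of the initial ideal under linear coordinate changes) Let K be an infinite field, σ a monomial order on P = K[x₁,…,xₙ], and I ⊆ P an ideal. Then there exist a monomial ideal J ⊆ P and a nonzero polynomial Δ in n² variables over K such that for every invertible n×n matrix g = (g_{ij}) over K with Δ(g) ≠ 0, the leading-term ideal LT_σ(φ_g(I)) equals J, where φ_g is the K-algebra automorphism of P determined by xⱼ ↦ Σᵢ g_{ij} xᵢ and φ_g(I) denotes the image ideal. In particular, the linear changes of coordinates g for which LT_σ(φ_g(I)) takes the common value J = gin_σ(I) contain a nonempty Zariski-open subset of the matrix space. -/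
open MvPolynomial

namespace MonomialOrd

variable {ν : Type} (σ : MonomialOrd ν)

theorem exists_max (s : Finset (ν →₀ ℕ)) (hs : s.Nonempty) :
    ∃ a ∈ s, ∀ b ∈ s, σ.le b a := by
  classical
  induction s using Finset.cons_induction with
  | empty => simp at hs
  | cons a s ha ih =>
    rcases s.eq_empty_or_nonempty with rfl | hs'
    · exact ⟨a, Finset.mem_cons_self _ _, by simp [σ.le_refl]⟩
    · obtain ⟨m, hm, hmax⟩ := ih hs'
      rcases σ.le_total a m with h | h
      · refine ⟨m, Finset.mem_cons_of_mem hm, ?_⟩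
        intro b hb
        rcases Finset.mem_cons.mp hb with rfl | hb
        · exact h
        · exact hmax b hb
      · refine ⟨a, Finset.mem_cons_self _ _, ?_⟩
        intro b hb
        rcases Finset.mem_cons.mp hb with rfl | hb
        · exact σ.le_refl b
        · exact σ.le_trans _ _ _ (hmax b hb) h

variable {A : Type} [CommSemiring A]

open Classical in
/-- The σ-leading exponent of a polynomial (junk value `0` for the zero polynomial). -/
noncomputable def lexp (F : MvPolynomial ν A) : ν →₀ ℕ :=
  if h : F = 0 then 0 else (σ.exists_max F.support (support_nonempty.mpr h)).choose

theorem lexp_mem {F : MvPolynomial ν A} (h : F ≠ 0) : σ.lexp F ∈ F.support := by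
  rw [lexp, dif_neg h]
  exact (σ.exists_max F.support (support_nonempty.mpr h)).choose_spec.1

theorem le_lexp {F : MvPolynomial ν A} {b : ν →₀ ℕ} (hb : b ∈ F.support) :
    σ.le b (σ.lexp F) := by
  have h : F ≠ 0 := by rintro rfl; simp at hb
  rw [lexp, dif_neg h]
  exact (σ.exists_max F.support (support_nonempty.mpr h)).choose_spec.2 b hb

theorem le_of_le (a b : ν →₀ ℕ) (h : a ≤ b) : σ.le a b := by
  obtain ⟨c, rfl⟩ := le_iff_exists_add.mp h
  have := σ.add_le_add 0 c a (σ.zero_le c)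
  rw [zero_add, add_comm] at this
  exact this

theorem wf {n : ℕ} (σ : MonomialOrd (Fin n)) :
    WellFounded (fun a b => σ.le a b ∧ a ≠ b) := by
  haveI : IsIrrefl (Fin n →₀ ℕ) (fun a b => σ.le a b ∧ a ≠ b) := ⟨fun a h => h.2 rfl⟩
  haveI : IsTrans (Fin n →₀ ℕ) (fun a b => σ.le a b ∧ a ≠ b) := by
    refine ⟨fun a b c hab hbc => ⟨σ.le_trans _ _ _ hab.1 hbc.1, ?_⟩⟩
    rintro rfl
    exact hab.2 (σ.le_antisymm _ _ hab.1 hbc.1)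
  haveI : IsStrictOrder (Fin n →₀ ℕ) (fun a b => σ.le a b ∧ a ≠ b) := ⟨⟩
  rw [RelEmbedding.wellFounded_iff_isEmpty]
  constructor
  intro e
  obtain ⟨m, k, hmk, hle⟩ :=
    (Set.isPWO_of_wellQuasiOrderedLE (Set.univ : Set (Fin n →₀ ℕ))).exists_lt (f := fun i => e i) (fun _ => Set.mem_univ _)
  have h1 : σ.le (e m) (e k) := σ.le_of_le _ _ hle
  have h2 : σ.le (e k) (e m) ∧ (e k : Fin n →₀ ℕ) ≠ e m := e.map_rel_iff.mpr hmk
  exact h2.2 (σ.le_antisymm _ _ h2.1 h1)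

end MonomialOrd

set_option maxHeartbeats 2000000 in
/-- genericity of the initial ideal under linear coordinate changes: over an
infinite field, there are a monomial ideal `J` and a nonzero polynomial `Δ` in the `n²`
matrix entries such that for every invertible matrix `g` with `Δ(g) ≠ 0`, the leading-term
ideal of the transformed ideal `φ_g(I)` equals `J` (the generic initial ideal `gin_σ(I)`).
Here `φ_g` is the `K`-algebra map determined by `xⱼ ↦ Σᵢ g_{ij} xᵢ`. -/
theorem generic_initial_ideal {K : Type} [Field K] [Infinite K] {n : ℕ}
    (σ : MonomialOrd (Fin n)) (I : Ideal (MvPolynomial (Fin n) K)) :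
    ∃ (J : Ideal (MvPolynomial (Fin n) K)) (Δ : MvPolynomial (Fin n × Fin n) K),
      (∃ S : Set (Fin n →₀ ℕ), J = Ideal.span ((fun a => monomial a (1 : K)) '' S)) ∧
      Δ ≠ 0 ∧
      ∀ g : Matrix (Fin n) (Fin n) K, IsUnit g.det →
        MvPolynomial.eval (fun q : Fin n × Fin n => g q.1 q.2) Δ ≠ 0 →
        ltIdeal σ
          (Ideal.map
            (MvPolynomial.aeval (R := K)
              (fun j : Fin n => ∑ i : Fin n, C (g i j) * X i) :
              MvPolynomial (Fin n) K →ₐ[K] MvPolynomial (Fin n) K)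
            I) = J := by
  classical
  -- the generic coordinate change
  set Φ : MvPolynomial (Fin n) K →ₐ[K] MvPolynomial (Fin n) (MvPolynomial (Fin n × Fin n) K) :=
    aeval (fun j : Fin n => ∑ i : Fin n, C (X (i, j) : MvPolynomial (Fin n × Fin n) K) * X i) with hΦ
  set Itil : Ideal (MvPolynomial (Fin n) (MvPolynomial (Fin n × Fin n) K)) := Ideal.map Φ.toRingHom I with hItil
  -- family of monomial ideals coming from finite subsets of Itil
  set 𝒥 : Set (Ideal (MvPolynomial (Fin n) K)) := { J | ∃ S : Finset (MvPolynomial (Fin n) (MvPolynomial (Fin n × Fin n) K)), (↑S : Set (MvPolynomial (Fin n) (MvPolynomial (Fin n × Fin n) K))) ⊆ (Itil : Set _) ∧ 0 ∉ S ∧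
      J = Ideal.span ((fun a => monomial a (1 : K)) '' (σ.lexp '' (↑S : Set (MvPolynomial (Fin n) (MvPolynomial (Fin n × Fin n) K))))) } with h𝒥
  have h𝒥ne : 𝒥.Nonempty := by
    refine ⟨Ideal.span ∅, ∅, ?_, ?_, ?_⟩ <;> simp
  -- maximal element via Noetherianity
  have hwf : WellFounded ((· > ·) : Ideal (MvPolynomial (Fin n) K) → Ideal (MvPolynomial (Fin n) K) → Prop) :=
    (inferInstance : WellFoundedGT (Ideal (MvPolynomial (Fin n) K))).wf
  obtain ⟨J₀, hJ₀mem, hJ₀max⟩ := hwf.has_min 𝒥 h𝒥ne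
  obtain ⟨S₀, hS₀sub, hS₀ne, hJ₀eq⟩ := hJ₀mem
  -- the maximality consequence: every nonzero element of Itil has leading monomial in J₀
  have hmaxim : ∀ F ∈ Itil, F ≠ 0 → monomial (σ.lexp F) (1 : K) ∈ J₀ := by
    intro F hF hF0
    set S₁ := insert F S₀ with hS₁
    have hJ₁mem : Ideal.span ((fun a => monomial a (1 : K)) '' (σ.lexp '' (↑S₁ : Set (MvPolynomial (Fin n) (MvPolynomial (Fin n × Fin n) K))))) ∈ 𝒥 := by
      refine ⟨S₁, ?_, ?_, rfl⟩
      · intro x hx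
        rcases Finset.mem_insert.mp hx with rfl | hx
        · exact hF
        · exact hS₀sub hx
      · intro hx
        rcases Finset.mem_insert.mp hx with h | h
        · exact hF0 h.symm
        · exact hS₀ne h
    have hle : J₀ ≤ Ideal.span ((fun a => monomial a (1 : K)) '' (σ.lexp '' (↑S₁ : Set (MvPolynomial (Fin n) (MvPolynomial (Fin n × Fin n) K))))) := by
      rw [hJ₀eq]
      apply Ideal.span_mono
      apply Set.image_mono
      apply Set.image_mono
      intro x hx
      exact Finset.mem_insert_of_mem hx
    have heq : Ideal.span ((fun a => monomial a (1 : K)) '' (σ.lexp '' (↑S₁ : Set (MvPolynomial (Fin n) (MvPolynomial (Fin n × Fin n) K))))) = J₀ := by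
      by_contra hne
      exact hJ₀max _ hJ₁mem (lt_of_le_of_ne hle (Ne.symm hne))
    rw [← heq]
    apply Ideal.subset_span
    exact ⟨σ.lexp F, ⟨F, Finset.mem_insert_self _ _, rfl⟩, rfl⟩
  -- the Δ polynomial
  refine ⟨J₀, ∏ F ∈ S₀, MvPolynomial.coeff (σ.lexp F) F, ⟨σ.lexp '' (↑S₀ : Set (MvPolynomial (Fin n) (MvPolynomial (Fin n × Fin n) K))), hJ₀eq⟩, ?_, ?_⟩
  · apply Finset.prod_ne_zero_iff.mpr
    intro F hF
    exact mem_support_iff.mp (σ.lexp_mem (fun h => hS₀ne (h ▸ hF)))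
  intro g hdet hΔ
  set ev := (MvPolynomial.eval (fun q : Fin n × Fin n => g q.1 q.2) : MvPolynomial (Fin n × Fin n) K →+* K) with hev
  set sp := (MvPolynomial.map ev : MvPolynomial (Fin n) (MvPolynomial (Fin n × Fin n) K) →+* MvPolynomial (Fin n) K) with hsp
  set φ : MvPolynomial (Fin n) K →ₐ[K] MvPolynomial (Fin n) K :=
    aeval (fun j : Fin n => ∑ i : Fin n, C (g i j) * X i) with hφ
  have hcomp : sp.comp Φ.toRingHom = φ.toRingHom := by
    apply MvPolynomial.ringHom_ext
    · intro r
      simp only [RingHom.coe_comp, Function.comp_apply, AlgHom.toRingHom_eq_coe,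
        RingHom.coe_coe, hΦ, hφ, hsp, aeval_C, MvPolynomial.algebraMap_apply, algebraMap_eq, MvPolynomial.map_C, hev, eval_C]
    · intro j
      simp only [RingHom.coe_comp, Function.comp_apply, AlgHom.toRingHom_eq_coe,
        RingHom.coe_coe, hΦ, hφ, hsp, aeval_X, map_sum, _root_.map_mul,
        MvPolynomial.map_C, MvPolynomial.map_X, hev, eval_X]
  have hspfun : ∀ p, sp (Φ p) = φ p := fun p => congrFun (congrArg DFunLike.coe hcomp) p
  have hI' : Ideal.map sp Itil = Ideal.map φ I := by
    rw [hItil, Ideal.map_map, hcomp]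
    rfl
  have hspsurj : Function.Surjective sp :=
    MvPolynomial.map_surjective ev (fun k => ⟨C k, by rw [hev]; exact eval_C _⟩)
  have hmem_sp : ∀ F ∈ Itil, sp F ∈ Ideal.map φ I := fun F hF => by
    rw [← hI']; exact Ideal.mem_map_of_mem sp hF
  have hsurj_mem : ∀ h ∈ Ideal.map φ I, ∃ F ∈ Itil, sp F = h := by
    intro h hh
    rw [← hI'] at hh
    obtain ⟨F, hF, rfl⟩ := (Ideal.mem_map_iff_of_surjective sp hspsurj).mp hh
    exact ⟨F, hF, rfl⟩
  have h1 : ∀ F ∈ S₀, ev (coeff (σ.lexp F) F) ≠ 0 := by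
    intro F hF h0
    apply hΔ
    rw [map_prod]
    exact Finset.prod_eq_zero hF h0
  have hsupp : ∀ F, (sp F).support ⊆ F.support := fun F => support_map_subset _ _
  have hcoeff : ∀ F a, coeff a (sp F) = ev (coeff a F) := fun F a => coeff_map ev F a
  -- key induction on the generic leading exponent
  have key : ∀ c : Fin n →₀ ℕ, ∀ F ∈ Itil, σ.lexp F = c →
      ∀ a, IsLeadingExp σ (sp F) a → monomial a (1 : K) ∈ J₀ := by
    intro c
    induction c using WellFounded.induction σ.wf with
    | _ c IH =>
    intro F hF hc a ha
    have hspF0 : sp F ≠ 0 := by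
      intro h0
      have := ha.1
      rw [h0] at this
      simp at this
    have hF0 : F ≠ 0 := by rintro rfl; exact hspF0 (map_zero sp)
    have hac : σ.le a c := hc ▸ σ.le_lexp (hsupp F ha.1)
    by_cases hca : a = c
    · rw [hca, ← hc]
      exact hmaxim F hF hF0
    · have hcsp : coeff c (sp F) = 0 := by
        by_contra h0
        exact hca (σ.le_antisymm _ _ hac (ha.2 c (mem_support_iff.mpr h0)))
      have hcJ : monomial c (1 : K) ∈ J₀ := hc ▸ hmaxim F hF hF0
      rw [hJ₀eq, mem_ideal_span_monomial_image] at hcJ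
      obtain ⟨d, hd, hdc⟩ := hcJ c (by
        rw [support_monomial, if_neg (one_ne_zero)]
        exact Finset.mem_singleton_self c)
      obtain ⟨G, hGS₀, rfl⟩ := hd
      have hGI : G ∈ Itil := hS₀sub hGS₀
      have hG0 : G ≠ 0 := fun h => hS₀ne (h ▸ hGS₀)
      set F' := C (coeff (σ.lexp G) G) * F -
        C (coeff c F) * (monomial (c - σ.lexp G) (1 : MvPolynomial (Fin n × Fin n) K) * G)
        with hF'
      have hF'I : F' ∈ Itil :=
        Submodule.sub_mem _ (Ideal.mul_mem_left _ _ hF)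
          (Ideal.mul_mem_left _ _ (Ideal.mul_mem_left _ _ hGI))
      have hdec : c - σ.lexp G + σ.lexp G = c := tsub_add_cancel_of_le hdc
      have hcoefmon : coeff c (monomial (c - σ.lexp G)
          (1 : MvPolynomial (Fin n × Fin n) K) * G) = coeff (σ.lexp G) G := by
        have h5 := coeff_monomial_mul (σ.lexp G) (c - σ.lexp G)
          (1 : MvPolynomial (Fin n × Fin n) K) G
        rw [hdec, one_mul] at h5
        exact h5
      have hcF' : coeff c F' = 0 := by
        rw [hF', coeff_sub, coeff_C_mul, coeff_C_mul, hcoefmon]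
        ring
      have hsuppF' : ∀ e ∈ F'.support, σ.le e c ∧ e ≠ c := by
        intro e he
        refine ⟨?_, fun h => (mem_support_iff.mp he) (h ▸ hcF')⟩
        have hne := mem_support_iff.mp he
        rw [hF', coeff_sub, coeff_C_mul, coeff_C_mul] at hne
        have hor : coeff e F ≠ 0 ∨
            coeff e (monomial (c - σ.lexp G) (1 : MvPolynomial (Fin n × Fin n) K) * G) ≠ 0 := by
          by_contra hcon
          push_neg at hcon
          rw [hcon.1, hcon.2] at hne
          simp at hne
        rcases hor with h | h
        · exact hc ▸ σ.le_lexp (mem_support_iff.mpr h)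
        · have he2 := MvPolynomial.support_mul _ _ (mem_support_iff.mpr h)
          rw [support_monomial, if_neg (one_ne_zero)] at he2
          rw [Finset.mem_add] at he2
          obtain ⟨b1, hb1, b2, hb2, rfl⟩ := he2
          rw [Finset.mem_singleton] at hb1
          subst hb1
          have h3 : σ.le b2 (σ.lexp G) := σ.le_lexp hb2
          have h4 := σ.add_le_add _ _ (c - σ.lexp G) h3
          rw [add_comm b2, add_comm (σ.lexp G)] at h4
          rw [hdec] at h4
          exact h4
      have hevF : ev (coeff c F) = 0 := by rw [← hcoeff]; exact hcsp
      have hspF' : sp F' = C (ev (coeff (σ.lexp G) G)) * sp F := by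
        rw [hF', map_sub, _root_.map_mul, _root_.map_mul, hsp, MvPolynomial.map_C,
          MvPolynomial.map_C, hevF, C_0, zero_mul, sub_zero]
      have hlcG : ev (coeff (σ.lexp G) G) ≠ 0 := h1 G hGS₀
      have hspF'0 : sp F' ≠ 0 := by
        rw [hspF']
        exact mul_ne_zero (fun h => hlcG (by simpa using h)) hspF0
      have hF'0 : F' ≠ 0 := fun h => hspF'0 (by rw [h, map_zero])
      have hsuppeq : (sp F').support = (sp F).support := by
        ext e
        rw [mem_support_iff, mem_support_iff, hspF', coeff_C_mul]
        exact ⟨fun h => fun h0 => h (by rw [h0, mul_zero]),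
          fun h h0 => h ((mul_eq_zero.mp h0).resolve_left hlcG)⟩
      have ha' : IsLeadingExp σ (sp F') a :=
        ⟨hsuppeq ▸ ha.1, fun b hb => ha.2 b (hsuppeq ▸ hb)⟩
      exact IH (σ.lexp F') (hsuppF' _ (σ.lexp_mem hF'0)) F' hF'I rfl a ha'
  -- conclusion
  show ltIdeal σ (Ideal.map φ I) = J₀
  apply le_antisymm
  · rw [ltIdeal, Ideal.span_le]
    rintro m ⟨f, hf, a, hfa, rfl⟩
    obtain ⟨F, hFI, rfl⟩ := hsurj_mem f hf
    exact key (σ.lexp F) F hFI rfl a hfa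
  · rw [hJ₀eq, Ideal.span_le]
    rintro m ⟨b, ⟨G, hG, rfl⟩, rfl⟩
    apply Ideal.subset_span
    refine ⟨sp G, hmem_sp G (hS₀sub hG), σ.lexp G, ⟨?_, ?_⟩, rfl⟩
    · exact mem_support_iff.mpr (by rw [hcoeff]; exact h1 G hG)
    · intro b hb
      exact σ.le_lexp (hsupp G hb)
end
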